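/- Suppose the weight α is well-defined and α·γ < δ − 1. Then there exist constants C₁ > 0, C₂ > 0 and r₀ > 0 such that for all r with 0 < r ≤ r₀, all integers n ≥ 0, and all (z,w) ∈ U^α_r with z ≠ 0 and w ≠ 0, the n-th iterates satisfy p^n(z) ≠ 0 and both coordinates of f^n(z,w) are nonzero, and moreover |ζ(p^n(z))| ≤ C₁·r/2^n and |η(f^n(z,w))| ≤ C₂·r/2^n. -/

import Mathlib

set_option maxHeartbeats 1000000
open Real



lemma aux_bdd_of_summable {ι : Type*} (f : ι → ℂ) (h : Summable f) :
    ∃ B : ℝ, 0 < B ∧ ∀ i, ‖(f i)‖ ≤ B := by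
  have h1 : ∀ᶠ i in Filter.cofinite, ‖(f i)‖ < 1 := by
    have h2 := h.tendsto_cofinite_zero.norm
    simp only [norm_zero] at h2
    have := h2.eventually_lt_const (by norm_num : (0:ℝ) < 1)
    simpa using this
  rw [Filter.eventually_cofinite] at h1
  set s := h1.toFinset
  refine ⟨1 + ∑ i ∈ s, ‖(f i)‖, by positivity, fun i => ?_⟩
  by_cases hi : ‖(f i)‖ < 1
  · have : (0:ℝ) ≤ ∑ i ∈ s, ‖(f i)‖ := Finset.sum_nonneg fun _ _ => by positivity
    linarith
  · have his : i ∈ s := by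
      simp only [s, Set.Finite.mem_toFinset, Set.mem_setOf_eq]
      exact hi
    have := Finset.single_le_sum (f := fun i => ‖(f i)‖)
      (fun j _ => by positivity) his
    linarith

lemma aux_key_ineq (γ n m : ℕ) (α x y r ρ : ℝ) (hα0 : 0 ≤ α)
    (hx : 0 < x) (hy : 0 < y) (hρ1 : ρ ≤ 1) (hrρ : r ≤ ρ) (hr0 : 0 < r)
    (hxy : x < r * y ^ α) (hyr : y < r)
    (hγn : γ ≤ n) (hγnm : γ < n ∨ 1 < m)
    (hcond : α * γ + 1 ≤ α * n + m) :
    x ^ n * y ^ m ≤ r * x ^ γ * y * (ρ ^ (n + m) / ρ ^ (γ + 2)) := by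
  have hρ0 : 0 < ρ := lt_of_lt_of_le hr0 hrρ
  have hGN : (γ:ℝ) ≤ (n:ℝ) := by exact_mod_cast hγn
  have he : 0 ≤ α * ((n:ℝ) - γ) + m - 1 := by nlinarith
  set e : ℝ := α * ((n:ℝ) - γ) + m - 1 with he_def
  set E : ℝ := ((n:ℝ) - γ) + e with hE_def
  have hE1 : 1 ≤ E := by
    rcases hγnm with h | h
    · have h1 : (1:ℝ) ≤ (n:ℝ) - γ := by
        have : (γ:ℝ) + 1 ≤ n := by exact_mod_cast h
        linarith
      rcases Nat.eq_zero_or_pos m with hm | hm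
      · subst hm
        have h2 : 1 ≤ α * ((n:ℝ) - γ) := by
          simp only [Nat.cast_zero, add_zero] at hcond; nlinarith
        rw [hE_def, he_def]; push_cast; nlinarith
      · have hM1 : (1:ℝ) ≤ m := by exact_mod_cast hm
        have : 0 ≤ α * ((n:ℝ) - γ) := by nlinarith
        rw [hE_def, he_def]; nlinarith
    · have hM2 : (2:ℝ) ≤ m := by exact_mod_cast h
      have : 0 ≤ α * ((n:ℝ) - γ) := by nlinarith
      rw [hE_def, he_def]; nlinarith
  have hE2 : (n:ℝ) + m - γ - 2 ≤ E - 1 := by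
    have : 0 ≤ α * ((n:ℝ) - γ) := by nlinarith
    rw [hE_def, he_def]; nlinarith
  have step1 : x ^ ((n:ℝ) - γ) ≤ r ^ ((n:ℝ) - γ) * y ^ (α * ((n:ℝ) - γ)) := by
    calc x ^ ((n:ℝ) - γ) ≤ (r * y ^ α) ^ ((n:ℝ) - γ) :=
          Real.rpow_le_rpow hx.le hxy.le (by linarith)
      _ = r ^ ((n:ℝ) - γ) * y ^ (α * ((n:ℝ) - γ)) := by
          rw [Real.mul_rpow hr0.le (Real.rpow_nonneg hy.le α),
            ← Real.rpow_mul hy.le]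
  have step2 : y ^ e ≤ r ^ e := Real.rpow_le_rpow hy.le hyr.le he
  have step3 : r ^ (E - 1) ≤ ρ ^ ((n:ℝ) + m - γ - 2) :=
    le_trans (Real.rpow_le_rpow hr0.le hrρ (by linarith))
      (Real.rpow_le_rpow_of_exponent_ge hρ0 hρ1 hE2)
  have hxne : x ^ n = x ^ (γ:ℝ) * x ^ ((n:ℝ) - γ) := by
    rw [← Real.rpow_natCast x n, show (n:ℝ) = (γ:ℝ) + ((n:ℝ) - γ) by ring,
      Real.rpow_add hx]
    rw [show (γ:ℝ) + ((n:ℝ) - γ) - γ = (n:ℝ) - γ by ring]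
  have hyne : y ^ m = y * y ^ ((m:ℝ) - 1) := by
    rw [← Real.rpow_natCast y m, show (m:ℝ) = 1 + ((m:ℝ) - 1) by ring,
      Real.rpow_add hy, Real.rpow_one]
    rw [show 1 + ((m:ℝ) - 1) - 1 = (m:ℝ) - 1 by ring]
  have hyy : y ^ (α * ((n:ℝ) - γ)) * y ^ ((m:ℝ) - 1) = y ^ e := by
    rw [← Real.rpow_add hy, he_def]; ring_nf
  have hrr : r ^ ((n:ℝ) - γ) * r ^ e = r * r ^ (E - 1) := by
    rw [← Real.rpow_add hr0, hE_def]
    nth_rewrite 2 [show r = r ^ (1:ℝ) by rw [Real.rpow_one]]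
    rw [← Real.rpow_add hr0]; ring_nf
  have hρeq : ρ ^ ((n:ℝ) + m - γ - 2) = ρ ^ (n + m) / ρ ^ (γ + 2) := by
    rw [show (n:ℝ) + m - γ - 2 = ((n + m : ℕ):ℝ) - ((γ + 2 : ℕ):ℝ) by push_cast; ring,
      Real.rpow_sub hρ0, Real.rpow_natCast, Real.rpow_natCast]
  have hxγ : x ^ γ = x ^ (γ:ℝ) := (Real.rpow_natCast x γ).symm
  calc x ^ n * y ^ m = (x ^ (γ:ℝ) * y) * (x ^ ((n:ℝ) - γ) * y ^ ((m:ℝ) - 1)) := by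
        rw [hxne, hyne]; ring
    _ ≤ (x ^ (γ:ℝ) * y) * ((r ^ ((n:ℝ) - γ) * y ^ (α * ((n:ℝ) - γ))) * y ^ ((m:ℝ) - 1)) := by
        have h1 : 0 ≤ x ^ (γ:ℝ) * y := by positivity
        have h2 : 0 ≤ y ^ ((m:ℝ) - 1) := Real.rpow_nonneg hy.le _
        exact mul_le_mul_of_nonneg_left (mul_le_mul_of_nonneg_right step1 h2) h1
    _ = (x ^ (γ:ℝ) * y) * (r ^ ((n:ℝ) - γ) * y ^ e) := by
        rw [← hyy]; ring
    _ ≤ (x ^ (γ:ℝ) * y) * (r ^ ((n:ℝ) - γ) * r ^ e) := by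
        have h1 : 0 ≤ x ^ (γ:ℝ) * y := by positivity
        have h2 : 0 ≤ r ^ ((n:ℝ) - γ) := Real.rpow_nonneg hr0.le _
        exact mul_le_mul_of_nonneg_left (mul_le_mul_of_nonneg_left step2 h2) h1
    _ = (x ^ (γ:ℝ) * y) * (r * r ^ (E - 1)) := by rw [hrr]
    _ ≤ (x ^ (γ:ℝ) * y) * (r * ρ ^ ((n:ℝ) + m - γ - 2)) := by
        have h1 : 0 ≤ x ^ (γ:ℝ) * y := by positivity
        exact mul_le_mul_of_nonneg_left (mul_le_mul_of_nonneg_left step3 hr0.le) h1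
    _ = r * x ^ γ * y * (ρ ^ (n + m) / ρ ^ (γ + 2)) := by
        rw [hρeq, hxγ]; ring

lemma aux_zeta_tail (δ : ℕ) (a : ℕ → ℂ) (ha : ∀ k : ℕ, k ≤ δ → a k = 0)
    (ρ B : ℝ) (hρ0 : 0 < ρ) (hB : ∀ k, ‖(a k)‖ * (2*ρ)^k ≤ B)
    (z : ℂ) (hz : ‖z‖ ≤ ρ)
    (hsum : Summable fun k : ℕ => a k * z ^ k) :
    ‖(∑' k : ℕ, a k * z ^ k)‖ ≤
      2 * B / ρ ^ (δ+1) * ‖z‖ ^ (δ+1) := by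
  have hB0 : 0 ≤ B := le_trans (by positivity) (hB 0)
  set x := ‖z‖ with hx_def
  have hx0 : 0 ≤ x := norm_nonneg z
  have hterm : ∀ k : ℕ, ‖a k * z ^ k‖ ≤ B / ρ^(δ+1) * x^(δ+1) * (1/2:ℝ)^k := by
    intro k
    rcases le_or_gt k δ with hk | hk
    · rw [ha k hk]; simp; positivity
    · obtain ⟨j, rfl⟩ := Nat.exists_eq_add_of_le (Nat.succ_le_of_lt hk)
      rw [norm_mul, norm_pow, ← hx_def]
      have hxj : x ^ j ≤ ρ ^ j := pow_le_pow_left₀ hx0 hz j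
      have hpoweq : (2*ρ)^(δ+1+j) * (1/2:ℝ)^(δ+1+j) = ρ^(δ+1) * ρ^j := by
        rw [← mul_pow, show (2*ρ)*(1/2:ℝ) = ρ by ring, pow_add]
      calc ‖(a (δ+1+j))‖ * x^(δ+1+j)
          = (‖(a (δ+1+j))‖ * x^j) * x^(δ+1) := by rw [pow_add]; ring
        _ ≤ (‖(a (δ+1+j))‖ * ρ^j) * x^(δ+1) := by
            have : 0 ≤ x^(δ+1) := by positivity
            have h2 : 0 ≤ ‖(a (δ+1+j))‖ := by positivity
            exact mul_le_mul_of_nonneg_right (mul_le_mul_of_nonneg_left hxj h2) this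
        _ = ‖(a (δ+1+j))‖ * (ρ^(δ+1) * ρ^j) * x^(δ+1) / ρ^(δ+1) := by
            field_simp
        _ = ‖(a (δ+1+j))‖ * ((2*ρ)^(δ+1+j) * (1/2:ℝ)^(δ+1+j)) * x^(δ+1) / ρ^(δ+1) := by
            rw [hpoweq]
        _ = (‖(a (δ+1+j))‖ * (2*ρ)^(δ+1+j)) * (1/2:ℝ)^(δ+1+j) * x^(δ+1) / ρ^(δ+1) := by
            ring
        _ ≤ B * (1/2:ℝ)^(δ+1+j) * x^(δ+1) / ρ^(δ+1) := by
            gcongr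
            exact hB _
        _ = B / ρ^(δ+1) * x^(δ+1) * (1/2:ℝ)^(δ+1+j) := by ring
  have hgsum : Summable (fun k : ℕ => B / ρ^(δ+1) * x^(δ+1) * (1/2:ℝ)^k) :=
    summable_geometric_two.mul_left _
  have hnormsum : Summable fun k : ℕ => ‖a k * z ^ k‖ :=
    Summable.of_nonneg_of_le (fun k => norm_nonneg _) hterm hgsum
  calc ‖(∑' k : ℕ, a k * z ^ k)‖ = ‖∑' k : ℕ, a k * z ^ k‖ :=
        rfl
    _ ≤ ∑' k : ℕ, ‖a k * z ^ k‖ := norm_tsum_le_tsum_norm hnormsum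
    _ ≤ ∑' k : ℕ, B / ρ^(δ+1) * x^(δ+1) * (1/2:ℝ)^k :=
        Summable.tsum_le_tsum hterm hnormsum hgsum
    _ = B / ρ^(δ+1) * x^(δ+1) * 2 := by rw [tsum_mul_left, tsum_geometric_two]
    _ = 2 * B / ρ ^ (δ+1) * x ^ (δ+1) := by ring

lemma aux_eta_tail (γ : ℕ) (α : ℝ) (hα0 : 0 ≤ α) (c : ℕ → ℕ → ℂ)
    (hcγ : ∀ n m : ℕ, c n m ≠ 0 → γ ≤ n ∧ (γ < n ∨ 1 < m))
    (hcond : ∀ n m : ℕ, c n m ≠ 0 → α * γ + 1 ≤ α * n + m)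
    (ρ B : ℝ) (hρ0 : 0 < ρ) (hρ1 : ρ ≤ 1)
    (hB : ∀ n m : ℕ, ‖(c n m)‖ * (2*ρ)^(n+m) ≤ B)
    (r : ℝ) (hr0 : 0 < r) (hrρ : r ≤ ρ)
    (z w : ℂ) (hz0 : z ≠ 0) (hw0 : w ≠ 0)
    (hz : ‖z‖ < r * ‖w‖ ^ α) (hw : ‖w‖ < r)
    (hsum : Summable fun nm : ℕ × ℕ => c nm.1 nm.2 * z ^ nm.1 * w ^ nm.2) :
    ‖(∑' nm : ℕ × ℕ, c nm.1 nm.2 * z ^ nm.1 * w ^ nm.2)‖ ≤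
      4 * B / ρ ^ (γ + 2) * r * ‖z‖ ^ γ * ‖w‖ := by
  have hB0 : 0 ≤ B := le_trans (by positivity) (hB 0 0)
  set x := ‖z‖ with hx_def
  set y := ‖w‖ with hy_def
  have hx0 : 0 < x := norm_pos_iff.mpr hz0
  have hy0 : 0 < y := norm_pos_iff.mpr hw0
  set K : ℝ := B / ρ^(γ+2) * r * x^γ * y with hK_def
  have hK0 : 0 ≤ K := by positivity
  have hterm : ∀ nm : ℕ × ℕ, ‖c nm.1 nm.2 * z ^ nm.1 * w ^ nm.2‖ ≤
      K * ((1/2:ℝ)^nm.1 * (1/2:ℝ)^nm.2) := by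
    rintro ⟨n, m⟩
    by_cases hcnm : c n m = 0
    · simp [hcnm]; positivity
    · obtain ⟨hγn, hγnm⟩ := hcγ n m hcnm
      have hcd := hcond n m hcnm
      rw [norm_mul, norm_mul, norm_pow, norm_pow, ← hx_def, ← hy_def]
      have hkey := aux_key_ineq γ n m α x y r ρ hα0 hx0 hy0 hρ1 hrρ hr0 hz hw hγn hγnm hcd
      have hcρ : ‖(c n m)‖ * ρ^(n+m) ≤ B * ((1/2:ℝ)^n * (1/2:ℝ)^m) := by
        have h2 : (2*ρ)^(n+m) * ((1/2:ℝ)^n * (1/2:ℝ)^m) = ρ^(n+m) := by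
          rw [← pow_add, ← mul_pow, show (2*ρ)*(1/2:ℝ) = ρ by ring]
        have h3 : ‖(c n m)‖ * ρ^(n+m) =
            (‖(c n m)‖ * (2*ρ)^(n+m)) * ((1/2:ℝ)^n * (1/2:ℝ)^m) := by
          rw [← h2]; ring
        rw [h3]
        exact mul_le_mul_of_nonneg_right (hB n m) (by positivity)
      calc ‖(c n m)‖ * x ^ n * y ^ m
          = ‖(c n m)‖ * (x ^ n * y ^ m) := by ring
        _ ≤ ‖(c n m)‖ * (r * x ^ γ * y * (ρ ^ (n + m) / ρ ^ (γ + 2))) :=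
            mul_le_mul_of_nonneg_left hkey (by positivity)
        _ = (‖(c n m)‖ * ρ^(n+m)) * (r * x ^ γ * y / ρ ^ (γ + 2)) := by ring
        _ ≤ (B * ((1/2:ℝ)^n * (1/2:ℝ)^m)) * (r * x ^ γ * y / ρ ^ (γ + 2)) :=
            mul_le_mul_of_nonneg_right hcρ (by positivity)
        _ = K * ((1/2:ℝ)^n * (1/2:ℝ)^m) := by rw [hK_def]; ring
  have hg0 : Summable fun nm : ℕ × ℕ => (1/2:ℝ)^nm.1 * (1/2:ℝ)^nm.2 :=
    summable_geometric_two.mul_of_nonneg summable_geometric_two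
      (fun _ => by positivity) (fun _ => by positivity)
  have hgsum : Summable fun nm : ℕ × ℕ => K * ((1/2:ℝ)^nm.1 * (1/2:ℝ)^nm.2) :=
    hg0.mul_left K
  have hnormsum : Summable fun nm : ℕ × ℕ => ‖c nm.1 nm.2 * z ^ nm.1 * w ^ nm.2‖ :=
    Summable.of_nonneg_of_le (fun _ => norm_nonneg _) hterm hgsum
  have htsumg : ∑' nm : ℕ × ℕ, (1/2:ℝ)^nm.1 * (1/2:ℝ)^nm.2 = 4 := by
    have hinner : ∀ b : ℕ, Summable fun m : ℕ => (1/2:ℝ)^b * (1/2:ℝ)^m :=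
      fun b => summable_geometric_two.mul_left ((1/2:ℝ)^b)
    rw [Summable.tsum_prod' hg0 hinner]
    have hval : ∀ b : ℕ, ∑' m : ℕ, (1/2:ℝ)^b * (1/2:ℝ)^m = (1/2:ℝ)^b * 2 := by
      intro b; rw [tsum_mul_left, tsum_geometric_two]
    rw [tsum_congr hval, tsum_mul_right, tsum_geometric_two]
    norm_num
  calc ‖(∑' nm : ℕ × ℕ, c nm.1 nm.2 * z ^ nm.1 * w ^ nm.2)‖
      = ‖∑' nm : ℕ × ℕ, c nm.1 nm.2 * z ^ nm.1 * w ^ nm.2‖ := rfl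
    _ ≤ ∑' nm : ℕ × ℕ, ‖c nm.1 nm.2 * z ^ nm.1 * w ^ nm.2‖ := norm_tsum_le_tsum_norm hnormsum
    _ ≤ ∑' nm : ℕ × ℕ, K * ((1/2:ℝ)^nm.1 * (1/2:ℝ)^nm.2) := Summable.tsum_le_tsum hterm hnormsum hgsum
    _ = K * 4 := by rw [tsum_mul_left, htsumg]
    _ = 4 * B / ρ ^ (γ + 2) * r * x ^ γ * y := by rw [hK_def]; ring

/-- Lemma 5.2 of Ueno (case `d = 1`): if the weight `α` is well-defined and
`αγ < δ − 1`, then there are constants `C₁, C₂, r₀ > 0` such that for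
`0 < r ≤ r₀`, `(z,w) ∈ U^α_r` with `z ≠ 0 ≠ w` and every `n ≥ 0`, the iterates
have nonzero coordinates and `|ζ(p^n(z))| ≤ C₁ r/2^n`, `|η(f^n(z,w))| ≤ C₂ r/2^n`,
where `ζ(z) = p(z)/z^δ − 1` and `η(z,w) = q(z,w)/(b z^γ w) − 1`. -/
theorem iterate_error_estimates
    (δ γ : ℕ) (hδ : 2 ≤ δ) (hγ : 1 ≤ γ)
    (b : ℂ) (hb : b ≠ 0)
    (R : ℝ) (hR : 0 < R)
    (a : ℕ → ℂ) (ha : ∀ k : ℕ, k ≤ δ → a k = 0)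
    (c : ℕ → ℕ → ℂ)
    (hc : ∀ n m : ℕ, c n m ≠ 0 → 2 ≤ n + m ∧ (γ < n ∨ (n = γ ∧ 1 < m)))
    (p : ℂ → ℂ) (q : ℂ → ℂ → ℂ)
    (hpsum : ∀ z : ℂ, ‖z‖ < R → Summable (fun k : ℕ => a k * z ^ k))
    (hp : ∀ z : ℂ, ‖z‖ < R → p z = z ^ δ + ∑' k : ℕ, a k * z ^ k)
    (hqsum : ∀ z w : ℂ, ‖z‖ < R → ‖w‖ < R →
      Summable (fun nm : ℕ × ℕ => c nm.1 nm.2 * z ^ nm.1 * w ^ nm.2))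
    (hq : ∀ z w : ℂ, ‖z‖ < R → ‖w‖ < R →
      q z w = b * z ^ γ * w + ∑' nm : ℕ × ℕ, c nm.1 nm.2 * z ^ nm.1 * w ^ nm.2)
    (f : ℂ × ℂ → ℂ × ℂ) (hf : ∀ zw : ℂ × ℂ, f zw = (p zw.1, q zw.1 zw.2))
    (ζ : ℂ → ℂ) (hζ : ∀ z : ℂ, z ≠ 0 → ζ z = p z / z ^ δ - 1)
    (η : ℂ × ℂ → ℂ)
    (hη : ∀ zw : ℂ × ℂ, zw.1 ≠ 0 → zw.2 ≠ 0 →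
      η zw = q zw.1 zw.2 / (b * zw.1 ^ γ * zw.2) - 1)
    (A : Set ℝ)
    (hA : A = {x : ℝ | 0 ≤ x ∧ x * γ + 1 ≤ δ ∧
      ∀ n m : ℕ, c n m ≠ 0 → x * γ + 1 ≤ x * n + m})
    (α : ℝ)
    (hα : IsLeast A α ∨ (A = ∅ ∧ (∀ n m : ℕ, m = 0 → c n m = 0) ∧ α = 0))
    (hαγ : α * γ < δ - 1)
    (U : ℝ → Set (ℂ × ℂ))
    (hU : ∀ r : ℝ, U r = {zw : ℂ × ℂ |
      ‖zw.1‖ < r * ‖zw.2‖ ^ α ∧ ‖zw.2‖ < r}) :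
    ∃ C₁ C₂ r₀ : ℝ, 0 < C₁ ∧ 0 < C₂ ∧ 0 < r₀ ∧
      ∀ r : ℝ, 0 < r → r ≤ r₀ → ∀ zw ∈ U r, zw.1 ≠ 0 → zw.2 ≠ 0 →
        ∀ n : ℕ,
          p^[n] zw.1 ≠ 0 ∧ (f^[n] zw).1 ≠ 0 ∧ (f^[n] zw).2 ≠ 0 ∧
          ‖(ζ (p^[n] zw.1))‖ ≤ C₁ * r / 2 ^ n ∧
          ‖(η (f^[n] zw))‖ ≤ C₂ * r / 2 ^ n := by
  -- basic facts about α
  have hα0 : 0 ≤ α := by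
    rcases hα with ⟨hmem, -⟩ | ⟨-, -, h⟩
    · rw [hA] at hmem; exact hmem.1
    · simp [h]
  have hcond : ∀ n m : ℕ, c n m ≠ 0 → α * γ + 1 ≤ α * n + m := by
    rcases hα with ⟨hmem, -⟩ | ⟨-, htriv, h⟩
    · rw [hA] at hmem; exact hmem.2.2
    · subst h; intro n m hcnm
      have hm : m ≠ 0 := fun hm0 => hcnm (htriv n m hm0)
      have h1 : (1:ℝ) ≤ m := by exact_mod_cast Nat.one_le_iff_ne_zero.mpr hm
      simp only [zero_mul, zero_add]; linarith
  have hcγ' : ∀ n m : ℕ, c n m ≠ 0 → γ ≤ n ∧ (γ < n ∨ 1 < m) := by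
    intro n m h
    obtain ⟨-, h2⟩ := hc n m h
    rcases h2 with h2 | ⟨h2a, h2b⟩
    · exact ⟨h2.le, Or.inl h2⟩
    · exact ⟨h2a.ge, Or.inr h2b⟩
  have hbabs : 0 < ‖b‖ := norm_pos_iff.mpr hb
  -- radius ρ
  set ρ : ℝ := min R 1 / 4 with hρ_def
  have hρ0 : 0 < ρ := by rw [hρ_def]; positivity
  have hρ1 : ρ ≤ 1/4 := by
    rw [hρ_def]
    have : min R 1 ≤ 1 := min_le_right _ _
    linarith
  have hρ1' : ρ ≤ 1 := by linarith
  have h2ρR : 2 * ρ < R := by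
    rw [hρ_def]
    have : min R 1 ≤ R := min_le_left _ _
    linarith
  have hρR : ρ < R := by linarith
  -- bounds on coefficients
  obtain ⟨Ba, hBa0, hBa'⟩ := aux_bdd_of_summable (fun k : ℕ => a k * ((2*ρ : ℝ) : ℂ) ^ k)
    (hpsum ((2*ρ : ℝ) : ℂ) (by rwa [Complex.norm_real, Real.norm_eq_abs, abs_of_pos (by positivity)]))
  have hBa : ∀ k : ℕ, ‖(a k)‖ * (2*ρ)^k ≤ Ba := by
    intro k
    have := hBa' k
    rwa [norm_mul, norm_pow, Complex.norm_real, Real.norm_eq_abs, abs_of_pos (by positivity)] at this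
  obtain ⟨Bc, hBc0, hBc'⟩ := aux_bdd_of_summable
    (fun nm : ℕ × ℕ => c nm.1 nm.2 * ((2*ρ : ℝ) : ℂ) ^ nm.1 * ((2*ρ : ℝ) : ℂ) ^ nm.2)
    (hqsum _ _ (by rwa [Complex.norm_real, Real.norm_eq_abs, abs_of_pos (by positivity)])
      (by rwa [Complex.norm_real, Real.norm_eq_abs, abs_of_pos (by positivity)]))
  have hBc : ∀ n m : ℕ, ‖(c n m)‖ * (2*ρ)^(n+m) ≤ Bc := by
    intro n m
    have := hBc' (n, m)
    rw [norm_mul, norm_mul, norm_pow, norm_pow, Complex.norm_real, Real.norm_eq_abs,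
      abs_of_pos (by positivity : (0:ℝ) < 2*ρ)] at this
    rw [pow_add, ← mul_assoc]
    exact this
  -- constants
  set Ca : ℝ := 2 * Ba / ρ ^ (δ+1) with hCa_def
  have hCa0 : 0 < Ca := by rw [hCa_def]; positivity
  set Cb : ℝ := 4 * Bc / ρ ^ (γ+2) / ‖b‖ with hCb_def
  have hCb0 : 0 < Cb := by rw [hCb_def]; positivity
  set t : ℝ := (δ:ℝ) - α * γ - 1 with ht_def
  have ht : 0 < t := by rw [ht_def]; linarith
  set K' : ℝ := 4 * (2 / ‖b‖) ^ α with hK'_def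
  have hK'0 : 0 < K' := by
    rw [hK'_def]
    have := Real.rpow_pos_of_pos (show (0:ℝ) < 2 / ‖b‖ by positivity) α
    linarith
  -- the estimates
  have hζ_est : ∀ z' : ℂ, z' ≠ 0 → ‖z'‖ ≤ ρ →
      ‖(ζ z')‖ ≤ Ca * ‖z'‖ := by
    intro z' hz0' hz'
    have hzR : ‖z'‖ < R := lt_of_le_of_lt hz' hρR
    have hT := aux_zeta_tail δ a ha ρ Ba hρ0 hBa z' hz' (hpsum z' hzR)
    have hzd : z' ^ δ ≠ 0 := pow_ne_zero δ hz0'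
    have hval : ζ z' = (∑' k : ℕ, a k * z' ^ k) / z' ^ δ := by
      rw [hζ z' hz0', hp z' hzR]
      field_simp; ring
    rw [hval, norm_div, norm_pow]
    rw [div_le_iff₀ (pow_pos (norm_pos_iff.mpr hz0') δ)]
    refine le_trans hT (le_of_eq ?_)
    rw [hCa_def, pow_succ]; ring
  have hη_est : ∀ s : ℝ, 0 < s → s ≤ ρ → ∀ zw' : ℂ × ℂ, zw'.1 ≠ 0 → zw'.2 ≠ 0 →
      ‖zw'.1‖ < s * ‖zw'.2‖ ^ α → ‖zw'.2‖ < s →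
      ‖(η zw')‖ ≤ Cb * s := by
    intro s hs0 hsρ zw' h1 h2 h3 h4
    have hy0 : 0 < ‖zw'.2‖ := norm_pos_iff.mpr h2
    have hyα : ‖zw'.2‖ ^ α ≤ 1 :=
      Real.rpow_le_one hy0.le (by linarith [lt_of_lt_of_le h4 hsρ]) hα0
    have hzs : ‖zw'.1‖ < s := by
      calc ‖zw'.1‖ < s * ‖zw'.2‖ ^ α := h3
        _ ≤ s * 1 := by exact mul_le_mul_of_nonneg_left hyα hs0.le
        _ = s := mul_one s
    have hzR : ‖zw'.1‖ < R := by linarith [lt_of_lt_of_le hzs hsρ]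
    have hwR : ‖zw'.2‖ < R := by linarith [lt_of_lt_of_le h4 hsρ]
    have hT := aux_eta_tail γ α hα0 c hcγ' hcond ρ Bc hρ0 hρ1' hBc s hs0 hsρ
      zw'.1 zw'.2 h1 h2 h3 h4 (hqsum zw'.1 zw'.2 hzR hwR)
    have hden : b * zw'.1 ^ γ * zw'.2 ≠ 0 :=
      mul_ne_zero (mul_ne_zero hb (pow_ne_zero γ h1)) h2
    have hval : η zw' = (∑' nm : ℕ × ℕ, c nm.1 nm.2 * zw'.1 ^ nm.1 * zw'.2 ^ nm.2) /
        (b * zw'.1 ^ γ * zw'.2) := by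
      rw [hη zw' h1 h2, hq zw'.1 zw'.2 hzR hwR]
      field_simp; ring
    rw [hval, norm_div, norm_mul, norm_mul, norm_pow]
    rw [div_le_iff₀ (mul_pos (mul_pos hbabs (pow_pos (norm_pos_iff.mpr h1) γ)) (norm_pos_iff.mpr h2))]
    refine le_trans hT (le_of_eq ?_)
    rw [hCb_def]
    field_simp
  -- multiplicative forms
  have hp_eq : ∀ z' : ℂ, z' ≠ 0 → p z' = z' ^ δ * (1 + ζ z') := by
    intro z' hz0'
    rw [hζ z' hz0']
    have hzd : z' ^ δ ≠ 0 := pow_ne_zero δ hz0'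
    field_simp; ring
  have hq_eq : ∀ zw' : ℂ × ℂ, zw'.1 ≠ 0 → zw'.2 ≠ 0 →
      q zw'.1 zw'.2 = b * zw'.1 ^ γ * zw'.2 * (1 + η zw') := by
    intro zw' h1 h2
    rw [hη zw' h1 h2]
    have hden : b * zw'.1 ^ γ * zw'.2 ≠ 0 :=
      mul_ne_zero (mul_ne_zero hb (pow_ne_zero γ h1)) h2
    field_simp; ring
  -- choice of r₀
  set r₀ : ℝ := min (min ρ (1/(2*Ca))) (min (1/(2*Cb)) (min (1/(8*‖b‖)) (K'⁻¹ ^ t⁻¹)))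
    with hr₀_def
  have hr₀0 : 0 < r₀ := by
    rw [hr₀_def]
    refine lt_min (lt_min hρ0 (by positivity)) (lt_min (by positivity) (lt_min (by positivity) ?_))
    exact Real.rpow_pos_of_pos (by positivity) _
  have hr₀ρ : r₀ ≤ ρ := le_trans (min_le_left _ _) (min_le_left _ _)
  have hr₀Ca : r₀ ≤ 1/(2*Ca) := le_trans (min_le_left _ _) (min_le_right _ _)
  have hr₀Cb : r₀ ≤ 1/(2*Cb) := le_trans (min_le_right _ _) (min_le_left _ _)
  have hr₀b : r₀ ≤ 1/(8*‖b‖) :=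
    le_trans (min_le_right _ _) (le_trans (min_le_right _ _) (min_le_left _ _))
  have hr₀K : r₀ ≤ K'⁻¹ ^ t⁻¹ :=
    le_trans (min_le_right _ _) (le_trans (min_le_right _ _) (min_le_right _ _))
  have hCahalf : Ca * r₀ ≤ 1/2 := by
    have : Ca * r₀ ≤ Ca * (1/(2*Ca)) := mul_le_mul_of_nonneg_left hr₀Ca hCa0.le
    have h2 : Ca * (1/(2*Ca)) = 1/2 := by
      rw [mul_one_div, div_eq_iff (by positivity : (0:ℝ) < 2*Ca).ne']; ring
    linarith
  have hCbhalf : Cb * r₀ ≤ 1/2 := by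
    have : Cb * r₀ ≤ Cb * (1/(2*Cb)) := mul_le_mul_of_nonneg_left hr₀Cb hCb0.le
    have h2 : Cb * (1/(2*Cb)) = 1/2 := by
      rw [mul_one_div, div_eq_iff (by positivity : (0:ℝ) < 2*Cb).ne']; ring
    linarith
  have hr₀1 : r₀ ≤ 1 := by linarith [hr₀ρ, hρ1]
  have h2b : 2 * ‖b‖ * r₀ ^ γ ≤ 1/2 := by
    have h1 : r₀ ^ γ ≤ r₀ := by
      have := pow_le_pow_of_le_one hr₀0.le hr₀1 hγ
      rwa [pow_one] at this
    have h2 : 2 * ‖b‖ * r₀ ≤ 2 * ‖b‖ * (1/(8*‖b‖)) :=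
      mul_le_mul_of_nonneg_left hr₀b (by positivity)
    have h3 : 2 * ‖b‖ * (1/(8*‖b‖)) = 1/4 := by field_simp; ring
    nlinarith
  have hK'cond : K' * r₀ ^ t ≤ 1 := by
    have h1 : r₀ ^ t ≤ (K'⁻¹ ^ t⁻¹ : ℝ) ^ t := Real.rpow_le_rpow hr₀0.le hr₀K ht.le
    have h2 : ((K'⁻¹ : ℝ) ^ t⁻¹) ^ t = K'⁻¹ := by
      rw [← Real.rpow_mul (by positivity), inv_mul_cancel₀ ht.ne', Real.rpow_one]
    have h3 : K' * r₀ ^ t ≤ K' * K'⁻¹ := by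
      rw [← h2]; exact mul_le_mul_of_nonneg_left h1 hK'0.le
    rw [mul_inv_cancel₀ hK'0.ne'] at h3
    exact h3
  refine ⟨Ca, Cb, r₀, hCa0, hCb0, hr₀0, ?_⟩
  intro r hr0 hrr₀ zw hzw hz0 hw0 n
  rw [hU] at hzw
  obtain ⟨hz1, hw1⟩ := hzw
  -- the main induction
  have main : ∀ n : ℕ, (f^[n] zw).1 = p^[n] zw.1 ∧ (f^[n] zw).1 ≠ 0 ∧ (f^[n] zw).2 ≠ 0 ∧
      ‖(f^[n] zw).1‖ < r/2^n * ‖(f^[n] zw).2‖ ^ α ∧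
      ‖(f^[n] zw).2‖ < r/2^n := by
    intro n
    induction n with
    | zero =>
      simp only [Function.iterate_zero, id_eq, pow_zero, div_one]
      exact ⟨trivial, hz0, hw0, hz1, hw1⟩
    | succ n ih =>
      obtain ⟨hpn, hzn0, hwn0, hznU, hwnU⟩ := ih
      set zn : ℂ := (f^[n] zw).1 with hzn_def
      set wn : ℂ := (f^[n] zw).2 with hwn_def
      set s : ℝ := r / 2^n with hs_def
      have hs0 : 0 < s := by rw [hs_def]; positivity
      have hsr : s ≤ r := by
        rw [hs_def]
        exact div_le_self hr0.le (one_le_pow₀ (by norm_num))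
      have hsr₀ : s ≤ r₀ := le_trans hsr hrr₀
      have hsρ : s ≤ ρ := le_trans hsr₀ hr₀ρ
      set x : ℝ := ‖zn‖ with hx_def
      set y : ℝ := ‖wn‖ with hy_def
      have hx0 : 0 < x := norm_pos_iff.mpr hzn0
      have hy0 : 0 < y := norm_pos_iff.mpr hwn0
      have hy1 : y ≤ 1 := by linarith [lt_of_lt_of_le hwnU hsρ]
      have hyα1 : y ^ α ≤ 1 := Real.rpow_le_one hy0.le hy1 hα0
      have hxs : x < s := by
        calc x < s * y ^ α := hznU
          _ ≤ s * 1 := mul_le_mul_of_nonneg_left hyα1 hs0.le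
          _ = s := mul_one s
      have hxr₀ : x ≤ r₀ := le_trans hxs.le hsr₀
      have hxρ : x ≤ ρ := le_trans hxs.le hsρ
      -- bounds on ζ and η
      have hζn : ‖(ζ zn)‖ ≤ Ca * x := hζ_est zn hzn0 hxρ
      have hζhalf : ‖(ζ zn)‖ ≤ 1/2 := by
        have : Ca * x ≤ Ca * r₀ := mul_le_mul_of_nonneg_left hxr₀ hCa0.le
        linarith
      have hηn : ‖(η (f^[n] zw))‖ ≤ Cb * s :=
        hη_est s hs0 hsρ (f^[n] zw) hzn0 hwn0 hznU hwnU
      have hηhalf : ‖(η (f^[n] zw))‖ ≤ 1/2 := by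
        have h1 : Cb * s ≤ Cb * r₀ := mul_le_mul_of_nonneg_left hsr₀ hCb0.le
        linarith
      -- abs bounds for 1 + ζ, 1 + η
      have habs_bnd : ∀ u : ℂ, ‖u‖ ≤ 1/2 →
          1/2 ≤ ‖(1 + u)‖ ∧ ‖(1 + u)‖ ≤ 2 := by
        intro u hu
        have h1 := norm_add_le (1 + u) (-u)
        have h2 := norm_add_le 1 u
        rw [show (1 + u) + -u = 1 by ring] at h1
        simp only [norm_one] at h1 h2
        have h3 : ‖(-u)‖ = ‖u‖ := norm_neg u
        constructor <;> linarith
      obtain ⟨hζlow, hζup⟩ := habs_bnd (ζ zn) hζhalf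
      obtain ⟨hηlow, hηup⟩ := habs_bnd (η (f^[n] zw)) hηhalf
      -- step equalities
      have hstep1 : (f^[n+1] zw).1 = p zn := by
        rw [Function.iterate_succ_apply', hf]
      have hstep2 : (f^[n+1] zw).2 = q zn wn := by
        rw [Function.iterate_succ_apply', hf]
      have hpzn : p zn = zn ^ δ * (1 + ζ zn) := hp_eq zn hzn0
      have hqzn : q zn wn = b * zn ^ γ * wn * (1 + η (f^[n] zw)) := hq_eq (f^[n] zw) hzn0 hwn0
      have hζne : (1 + ζ zn) ≠ 0 := by
        intro h; rw [h] at hζlow; simp at hζlow; linarith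
      have hηne : (1 + η (f^[n] zw)) ≠ 0 := by
        intro h; rw [h] at hηlow; simp at hηlow; linarith
      have hpn0 : p zn ≠ 0 := by
        rw [hpzn]; exact mul_ne_zero (pow_ne_zero δ hzn0) hζne
      have hqn0 : q zn wn ≠ 0 := by
        rw [hqzn]
        exact mul_ne_zero (mul_ne_zero (mul_ne_zero hb (pow_ne_zero γ hzn0)) hwn0) hηne
      -- abs values
      have hpabs : ‖(p zn)‖ = x ^ δ * ‖(1 + ζ zn)‖ := by
        rw [hpzn, norm_mul, norm_pow]
      have hqabs : ‖(q zn wn)‖ =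
          ‖b‖ * x ^ γ * y * ‖(1 + η (f^[n] zw))‖ := by
        rw [hqzn, norm_mul, norm_mul, norm_mul, norm_pow]
      have hq_up : ‖(q zn wn)‖ ≤ 2 * ‖b‖ * x ^ γ * y := by
        rw [hqabs]
        have h1 : ‖b‖ * x ^ γ * y * ‖(1 + η (f^[n] zw))‖ ≤
            ‖b‖ * x ^ γ * y * 2 := mul_le_mul_of_nonneg_left hηup (by positivity)
        linarith
      have hq_low : ‖b‖ / 2 * x ^ γ * y ≤ ‖(q zn wn)‖ := by
        rw [hqabs]
        have h1 : ‖b‖ * x ^ γ * y * (1/2) ≤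
            ‖b‖ * x ^ γ * y * ‖(1 + η (f^[n] zw))‖ :=
          mul_le_mul_of_nonneg_left hηlow (by positivity)
        linarith
      -- goal 5 : second coordinate small
      have goal5 : ‖(q zn wn)‖ < r / 2^(n+1) := by
        have hxγ : x ^ γ ≤ r₀ ^ γ := pow_le_pow_left₀ hx0.le hxr₀ γ
        have h1 : 2 * ‖b‖ * x ^ γ * y ≤ 2 * ‖b‖ * r₀ ^ γ * y := by
          have := mul_le_mul_of_nonneg_left hxγ (by positivity : (0:ℝ) ≤ 2 * ‖b‖)
          exact mul_le_mul_of_nonneg_right this hy0.le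
        have h2 : 2 * ‖b‖ * r₀ ^ γ * y ≤ (1/2) * y := by
          exact mul_le_mul_of_nonneg_right h2b hy0.le
        have h3 : (1/2) * y < (1/2) * s := by linarith [hwnU]
        have h4 : (1/2) * s = r / 2^(n+1) := by
          rw [hs_def, pow_succ]; ring
        calc ‖(q zn wn)‖ ≤ 2 * ‖b‖ * x ^ γ * y := hq_up
          _ ≤ 2 * ‖b‖ * r₀ ^ γ * y := h1
          _ ≤ (1/2) * y := h2
          _ < (1/2) * s := h3
          _ = r / 2^(n+1) := h4
      -- goal 4 : first coordinate in the cone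
      have goal4 : ‖(p zn)‖ < r / 2^(n+1) * ‖(q zn wn)‖ ^ α := by
        have hqlow' : (‖b‖ / 2) * x ^ γ * y ≤ ‖(q zn wn)‖ := hq_low
        have hqα : ((‖b‖ / 2) * x ^ γ * y) ^ α ≤ ‖(q zn wn)‖ ^ α :=
          Real.rpow_le_rpow (by positivity) hqlow' hα0
        have hexpand : ((‖b‖ / 2) * x ^ γ * y) ^ α =
            (‖b‖ / 2) ^ α * x ^ ((γ:ℝ) * α) * y ^ α := by
          rw [Real.mul_rpow (by positivity) hy0.le,
            Real.mul_rpow (by positivity) (by positivity),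
            ← Real.rpow_natCast x γ, ← Real.rpow_mul hx0.le]
        have hδsplit : x ^ δ = x ^ ((γ:ℝ) * α) * x ^ (t + 1) := by
          rw [← Real.rpow_natCast x δ,
            show (δ:ℝ) = (γ:ℝ) * α + (t + 1) by rw [ht_def]; ring,
            Real.rpow_add hx0]
        have hstrict : x ^ (t + 1) < (s * y ^ α) ^ (t + 1) :=
          Real.rpow_lt_rpow hx0.le hznU (by linarith)
        have hsplit2 : (s * y ^ α) ^ (t + 1) = s * s ^ t * (y ^ α * y ^ (α * t)) := by
          rw [Real.mul_rpow hs0.le (by positivity), ← Real.rpow_mul hy0.le,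
            show s ^ (t+1) = s ^ t * s ^ (1:ℝ) from Real.rpow_add hs0 t 1,
            Real.rpow_one,
            show α * (t+1) = α + α * t by ring,
            Real.rpow_add hy0]
          ring
        -- the numeric inequality
        have hst : s ^ t ≤ r₀ ^ t := Real.rpow_le_rpow hs0.le hsr₀ ht.le
        have hyt : y ^ (α * t) ≤ 1 := Real.rpow_le_one hy0.le hy1 (by positivity)
        have hA1 : K' * (s ^ t * y ^ (α * t)) ≤ 1 := by
          have h1 : s ^ t * y ^ (α * t) ≤ r₀ ^ t * 1 := by
            have := mul_le_mul hst hyt (by positivity) (by positivity : (0:ℝ) ≤ r₀ ^ t)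
            simpa using this
          have h2 : K' * (s ^ t * y ^ (α * t)) ≤ K' * (r₀ ^ t * 1) :=
            mul_le_mul_of_nonneg_left h1 hK'0.le
          rw [mul_one] at h2
          exact le_trans h2 hK'cond
        have hQ : (2 / ‖b‖) ^ α * (‖b‖ / 2) ^ α = 1 := by
          rw [← Real.mul_rpow (by positivity) (by positivity),
            show 2 / ‖b‖ * (‖b‖ / 2) = 1 by field_simp,
            Real.one_rpow]
        have h6 : 2 * s ^ t * y ^ (α * t) * (2 / ‖b‖) ^ α ≤ 1/2 := by
          have : 2 * s ^ t * y ^ (α * t) * (2 / ‖b‖) ^ α =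
              (1/2) * (K' * (s ^ t * y ^ (α * t))) := by
            rw [hK'_def]; ring
          rw [this]
          linarith
        have h7 : 2 * s ^ t * y ^ (α * t) ≤ (1/2) * (‖b‖ / 2) ^ α := by
          have h8 := mul_le_mul_of_nonneg_right h6
            (Real.rpow_nonneg (by positivity : (0:ℝ) ≤ ‖b‖ / 2) α)
          calc 2 * s ^ t * y ^ (α * t)
              = 2 * s ^ t * y ^ (α * t) * ((2 / ‖b‖) ^ α * (‖b‖ / 2) ^ α) := by
                rw [hQ, mul_one]
            _ = 2 * s ^ t * y ^ (α * t) * (2 / ‖b‖) ^ α * (‖b‖ / 2) ^ α := by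
                ring
            _ ≤ 1/2 * (‖b‖ / 2) ^ α := h8
        have hmain : 2 * (x ^ ((γ:ℝ) * α) * (s * s ^ t * (y ^ α * y ^ (α * t)))) ≤
            s / 2 * ((‖b‖ / 2) ^ α * x ^ ((γ:ℝ) * α) * y ^ α) := by
          have hpos : (0:ℝ) ≤ x ^ ((γ:ℝ) * α) * y ^ α * s := by positivity
          calc 2 * (x ^ ((γ:ℝ) * α) * (s * s ^ t * (y ^ α * y ^ (α * t))))
              = (2 * s ^ t * y ^ (α * t)) * (x ^ ((γ:ℝ) * α) * y ^ α * s) := by ring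
            _ ≤ ((1/2) * (‖b‖ / 2) ^ α) * (x ^ ((γ:ℝ) * α) * y ^ α * s) :=
                mul_le_mul_of_nonneg_right h7 hpos
            _ = s / 2 * ((‖b‖ / 2) ^ α * x ^ ((γ:ℝ) * α) * y ^ α) := by ring
        have hxpos : (0:ℝ) < x ^ ((γ:ℝ) * α) := Real.rpow_pos_of_pos hx0 _
        have hs2 : s / 2 = r / 2^(n+1) := by rw [hs_def, pow_succ]; ring
        calc ‖(p zn)‖ = x ^ δ * ‖(1 + ζ zn)‖ := hpabs
          _ ≤ x ^ δ * 2 := mul_le_mul_of_nonneg_left hζup (by positivity)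
          _ = 2 * (x ^ ((γ:ℝ) * α) * x ^ (t + 1)) := by rw [hδsplit]; ring
          _ < 2 * (x ^ ((γ:ℝ) * α) * (s * s ^ t * (y ^ α * y ^ (α * t)))) := by
              rw [← hsplit2]
              have := mul_lt_mul_of_pos_left hstrict hxpos
              linarith [mul_lt_mul_of_pos_left this (show (0:ℝ) < 2 by norm_num)]
          _ ≤ s / 2 * ((‖b‖ / 2) ^ α * x ^ ((γ:ℝ) * α) * y ^ α) := hmain
          _ = s / 2 * ((‖b‖ / 2) * x ^ γ * y) ^ α := by rw [hexpand]
          _ ≤ s / 2 * ‖(q zn wn)‖ ^ α :=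
              mul_le_mul_of_nonneg_left hqα (by positivity)
          _ = r / 2^(n+1) * ‖(q zn wn)‖ ^ α := by rw [hs2]
      refine ⟨?_, ?_, ?_, ?_, ?_⟩
      · rw [hstep1, Function.iterate_succ_apply', hpn]
      · rw [hstep1]; exact hpn0
      · rw [hstep2]; exact hqn0
      · rw [hstep1, hstep2]; exact goal4
      · rw [hstep2]; exact goal5
  -- conclude
  obtain ⟨hpn, hzn0, hwn0, hznU, hwnU⟩ := main n
  have hs0 : (0:ℝ) < r / 2^n := by positivity
  have hsr : r / 2^n ≤ r := div_le_self hr0.le (one_le_pow₀ (by norm_num))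
  have hsρ : r / 2^n ≤ ρ := le_trans (le_trans hsr hrr₀) hr₀ρ
  have hy1 : ‖(f^[n] zw).2‖ ≤ 1 := by linarith [lt_of_lt_of_le hwnU hsρ, hρ1]
  have hyα1 : ‖(f^[n] zw).2‖ ^ α ≤ 1 :=
    Real.rpow_le_one (norm_nonneg _) hy1 hα0
  have hxs : ‖(f^[n] zw).1‖ < r / 2^n := by
    calc ‖(f^[n] zw).1‖ < r/2^n * ‖(f^[n] zw).2‖ ^ α := hznU
      _ ≤ r/2^n * 1 := mul_le_mul_of_nonneg_left hyα1 hs0.le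
      _ = r/2^n := mul_one _
  refine ⟨?_, hzn0, hwn0, ?_, ?_⟩
  · rw [← hpn]; exact hzn0
  · rw [← hpn]
    have h1 : ‖(ζ (f^[n] zw).1)‖ ≤ Ca * ‖(f^[n] zw).1‖ :=
      hζ_est _ hzn0 (le_trans hxs.le hsρ)
    have h2 : Ca * ‖(f^[n] zw).1‖ ≤ Ca * (r / 2^n) :=
      mul_le_mul_of_nonneg_left hxs.le hCa0.le
    calc ‖(ζ (f^[n] zw).1)‖ ≤ Ca * (r/2^n) := le_trans h1 h2
      _ = Ca * r / 2^n := by ring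
  · have h1 : ‖(η (f^[n] zw))‖ ≤ Cb * (r/2^n) :=
      hη_est (r/2^n) hs0 hsρ (f^[n] zw) hzn0 hwn0 hznU hwnU
    calc ‖(η (f^[n] zw))‖ ≤ Cb * (r/2^n) := h1
      _ = Cb * r / 2^n := by ring
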